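/- Lommel's integral: for any ν ≥ 0 and any t > 0, ∫₀^t r·J_ν(r)² dr = (t² − ν²)/2 · J_ν(t)² + t²/2 · (J_ν'(t))², where J_ν is the Bessel function of the first kind. -/

import Mathlib

open scoped Nat

noncomputable def bA (ν : ℝ) (m : ℕ) : ℝ :=
  (-1) ^ m / (m.factorial * Real.Gamma ((m : ℝ) + ν + 1) * 4 ^ m)

noncomputable def bG (ν x : ℝ) : ℝ := ∑' m : ℕ, bA ν m * x ^ (2 * m)
noncomputable def bG1 (ν x : ℝ) : ℝ :=
  ∑' m : ℕ, bA ν m * ((2 * m : ℕ) : ℝ) * x ^ (2 * m - 1)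
noncomputable def bG2 (ν x : ℝ) : ℝ :=
  ∑' m : ℕ, bA ν m * ((2 * m : ℕ) : ℝ) * ((2 * m - 1 : ℕ) : ℝ) * x ^ (2 * m - 2)

lemma bGamma_pos {ν : ℝ} (hν : 0 ≤ ν) (m : ℕ) : 0 < Real.Gamma ((m : ℝ) + ν + 1) :=
  Real.Gamma_pos_of_pos (by positivity)

lemma bfac_Gamma_le {ν : ℝ} (hν : 0 ≤ ν) (m : ℕ) :
    (m.factorial : ℝ) * Real.Gamma (ν + 1) ≤ Real.Gamma ((m : ℝ) + ν + 1) := by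
  induction m with
  | zero => simp
  | succ m ih =>
    have h1 : ((m + 1 : ℕ) : ℝ) + ν + 1 = ((m : ℝ) + ν + 1) + 1 := by push_cast; ring
    have h2 : ((m : ℝ) + ν + 1) ≠ 0 := by positivity
    rw [h1, Real.Gamma_add_one h2]
    have h3 : ((m + 1 : ℕ) : ℝ) * ((m.factorial : ℝ) * Real.Gamma (ν + 1))
        ≤ ((m : ℝ) + ν + 1) * Real.Gamma ((m : ℝ) + ν + 1) := by
      apply mul_le_mul (by push_cast; linarith) ih (by positivity) (by positivity)
    calc ((m + 1).factorial : ℝ) * Real.Gamma (ν + 1)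
        = ((m + 1 : ℕ) : ℝ) * ((m.factorial : ℝ) * Real.Gamma (ν + 1)) := by
          rw [Nat.factorial_succ]; push_cast; ring
      _ ≤ _ := h3

lemma bA_abs_le {ν : ℝ} (hν : 0 ≤ ν) (m : ℕ) :
    |bA ν m| ≤ 1 / (Real.Gamma (ν + 1) * m.factorial * 4 ^ m) := by
  have hG := bGamma_pos hν m
  have hG1 : 0 < Real.Gamma (ν + 1) := Real.Gamma_pos_of_pos (by positivity)
  have hf : (0:ℝ) < m.factorial := by positivity
  rw [bA, abs_div, abs_pow, abs_neg, abs_one, one_pow]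
  rw [abs_of_pos (by positivity)]
  apply one_div_le_one_div_of_le (by positivity)
  calc Real.Gamma (ν+1) * (m.factorial:ℝ) * 4 ^ m
      = ((m.factorial:ℝ) * Real.Gamma (ν+1)) * 4 ^ m := by ring
    _ ≤ Real.Gamma ((m:ℝ) + ν + 1) * 4 ^ m := by
        gcongr; exact bfac_Gamma_le hν m
    _ ≤ (m.factorial:ℝ) * Real.Gamma ((m:ℝ) + ν + 1) * 4 ^ m := by
        have hf1 : (1:ℝ) ≤ (m.factorial : ℝ) := by
          exact_mod_cast Nat.one_le_iff_ne_zero.mpr (Nat.factorial_ne_zero m)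
        nlinarith [mul_pos hG (pow_pos (by norm_num : (0:ℝ) < 4) m)]

lemma bsummable_bound {ν : ℝ} (hν : 0 ≤ ν) (R : ℝ) :
    Summable (fun m : ℕ => |bA ν m| * (2 * (m:ℝ) + 2) ^ 2 * (R ^ 2) ^ m) := by
  have hG1 : 0 < Real.Gamma (ν + 1) := Real.Gamma_pos_of_pos (by positivity)
  apply Summable.of_nonneg_of_le (fun m => by positivity)
    (f := fun m => (16 / Real.Gamma (ν+1)) * ((R^2) ^ m / m.factorial))
  · intro m
    have h1 : |bA ν m| ≤ 1 / (Real.Gamma (ν + 1) * m.factorial * 4 ^ m) := bA_abs_le hν m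
    have h2 : (2 * (m:ℝ) + 2) ^ 2 ≤ 16 * 4 ^ m := by
      have h0 : ((m:ℝ) + 1) ≤ 2 ^ m * 2 := by
        have : (m + 1 : ℕ) ≤ 2 ^ m * 2 := by
          have := Nat.lt_two_pow_self (n := m)
          calc m + 1 ≤ 2 ^ m + 1 := by omega
            _ ≤ 2 ^ m * 2 := by have := Nat.one_le_two_pow (n := m); omega
        exact_mod_cast this
      have h2m : (0:ℝ) ≤ (m:ℝ) + 1 := by positivity
      have h4 : ((2:ℝ) ^ m) ^ 2 = 4 ^ m := by
        rw [← pow_mul, mul_comm, pow_mul]; norm_num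
      nlinarith [sq_nonneg ((2:ℝ)^m), pow_pos (by norm_num : (0:ℝ) < 2) m]
    have hR : (0:ℝ) ≤ (R^2)^m := by positivity
    calc |bA ν m| * (2 * (m:ℝ) + 2) ^ 2 * (R ^ 2) ^ m
        ≤ (1 / (Real.Gamma (ν + 1) * m.factorial * 4 ^ m)) * (16 * 4 ^ m) * (R ^ 2) ^ m := by
          apply mul_le_mul _ le_rfl hR (by positivity)
          apply mul_le_mul h1 h2 (by positivity) (by positivity)
      _ = (16 / Real.Gamma (ν+1)) * ((R^2) ^ m / m.factorial) := by
          have hf : (m.factorial : ℝ) ≠ 0 := by positivity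
          have h4 : ((4:ℝ))^m ≠ 0 := by positivity
          field_simp
  · exact (Real.summable_pow_div_factorial (R^2)).mul_left _

lemma bsummable_of_le {ν : ℝ} (hν : 0 ≤ ν) {f : ℕ → ℝ} (C R : ℝ)
    (h : ∀ m, ‖f m‖ ≤ C * (|bA ν m| * (2 * (m:ℝ) + 2) ^ 2 * (R ^ 2) ^ m)) :
    Summable f :=
  Summable.of_norm_bounded ((bsummable_bound hν R).mul_left C) h

lemma bterm_bound {ν : ℝ} (hν : 0 ≤ ν) (m : ℕ) {y R : ℝ} (hy : |y| ≤ R) (hR : 1 ≤ R)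
    (k : ℕ) (c : ℝ) (hc : |c| ≤ (2 * (m:ℝ) + 2) ^ 2) :
    ‖bA ν m * c * y ^ (2 * m - k)‖ ≤ |bA ν m| * (2 * (m:ℝ) + 2) ^ 2 * (R ^ 2) ^ m := by
  have hR0 : (0:ℝ) ≤ R := by linarith
  have h1 : |y| ^ (2 * m - k) ≤ R ^ (2 * m) := by
    calc |y| ^ (2 * m - k) ≤ R ^ (2 * m - k) := pow_le_pow_left₀ (abs_nonneg y) hy _
      _ ≤ R ^ (2 * m) := pow_le_pow_right₀ hR (Nat.sub_le _ _)
  rw [norm_mul, norm_mul]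
  have : (R ^ 2) ^ m = R ^ (2 * m) := by rw [← pow_mul, mul_comm]
  rw [this]
  have hb : (0:ℝ) ≤ |bA ν m| := abs_nonneg _
  calc ‖bA ν m‖ * ‖c‖ * ‖y ^ (2*m - k)‖
      = |bA ν m| * |c| * |y| ^ (2*m-k) := by
        simp [Real.norm_eq_abs, abs_pow]
    _ ≤ |bA ν m| * ((2 * (m:ℝ) + 2) ^ 2) * R ^ (2*m) := by
        apply mul_le_mul _ h1 (by positivity) (by positivity)
        exact mul_le_mul le_rfl hc (abs_nonneg c) hb

lemma bG_summable {ν : ℝ} (hν : 0 ≤ ν) (x : ℝ) :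
    Summable (fun m : ℕ => bA ν m * x ^ (2 * m)) := by
  apply bsummable_of_le hν 1 (|x| + 1)
  intro m
  rw [one_mul]
  have := bterm_bound hν m (y := x) (R := |x| + 1) (by linarith [abs_nonneg x]) (by linarith [abs_nonneg x]) 0 1 (by rw [abs_one]; nlinarith [sq_nonneg (2*(m:ℝ)+2), (by positivity : (0:ℝ) ≤ (m:ℝ))]
    )
  simpa using this

lemma hasDerivAt_bG {ν : ℝ} (hν : 0 ≤ ν) (x : ℝ) :
    HasDerivAt (bG ν) (bG1 ν x) x := by
  set R := |x| + 1 with hRdef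
  have hR1 : 1 ≤ R := by rw [hRdef]; linarith [abs_nonneg x]
  have hxR : |x| < R := by rw [hRdef]; linarith
  apply hasDerivAt_tsum_of_isPreconnected
    (u := fun m => |bA ν m| * (2 * (m:ℝ) + 2) ^ 2 * (R ^ 2) ^ m)
    (bsummable_bound hν R) (Metric.isOpen_ball (x := (0:ℝ)) (ε := R))
    ((convex_ball (0:ℝ) R).isPreconnected)
    (g' := fun m y => bA ν m * ((2 * m : ℕ) : ℝ) * y ^ (2 * m - 1))
    (y₀ := x) (y := x)
  · intro m y _
    have := ((hasDerivAt_pow (2*m) y).const_mul (bA ν m))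
    simpa [mul_assoc] using this
  · intro m y hy
    rw [Metric.mem_ball, dist_zero_right, Real.norm_eq_abs] at hy
    apply bterm_bound hν m hy.le hR1 1
    rw [Nat.abs_cast]
    push_cast
    nlinarith [(by positivity : (0:ℝ) ≤ (m:ℝ))]
  · rw [Metric.mem_ball, dist_zero_right, Real.norm_eq_abs]; exact hxR
  · exact bG_summable hν x
  · rw [Metric.mem_ball, dist_zero_right, Real.norm_eq_abs]; exact hxR

lemma hasDerivAt_bG1 {ν : ℝ} (hν : 0 ≤ ν) (x : ℝ) :
    HasDerivAt (bG1 ν) (bG2 ν x) x := by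
  set R := |x| + 1 with hRdef
  have hR1 : 1 ≤ R := by rw [hRdef]; linarith [abs_nonneg x]
  have hxR : |x| < R := by rw [hRdef]; linarith
  apply hasDerivAt_tsum_of_isPreconnected
    (u := fun m => |bA ν m| * (2 * (m:ℝ) + 2) ^ 2 * (R ^ 2) ^ m)
    (bsummable_bound hν R) (Metric.isOpen_ball (x := (0:ℝ)) (ε := R))
    ((convex_ball (0:ℝ) R).isPreconnected)
    (g' := fun m y => bA ν m * ((2 * m : ℕ) : ℝ) * ((2 * m - 1 : ℕ) : ℝ) * y ^ (2 * m - 2))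
    (y₀ := x) (y := x)
  · intro m y _
    have := ((hasDerivAt_pow (2*m - 1) y).const_mul (bA ν m * ((2 * m : ℕ) : ℝ)))
    have h2 : 2 * m - 1 - 1 = 2 * m - 2 := by omega
    rw [h2] at this
    convert this using 1
    rfl
    ring
  · intro m y hy
    rw [Metric.mem_ball, dist_zero_right, Real.norm_eq_abs] at hy
    have := bterm_bound hν m hy.le hR1 2
      (c := ((2 * m : ℕ) : ℝ) * ((2 * m - 1 : ℕ) : ℝ)) ?_
    · convert this using 2; rfl; ring
    · rw [abs_mul, Nat.abs_cast, Nat.abs_cast]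
      have h1 : ((2 * m : ℕ) : ℝ) ≤ 2 * (m:ℝ) + 2 := by push_cast; linarith
      have h2 : ((2 * m - 1 : ℕ) : ℝ) ≤ 2 * (m:ℝ) + 2 := by
        have : (2 * m - 1 : ℕ) ≤ 2 * m := by omega
        calc ((2 * m - 1 : ℕ) : ℝ) ≤ ((2 * m : ℕ) : ℝ) := by exact_mod_cast this
          _ ≤ 2 * (m:ℝ) + 2 := h1
      calc ((2 * m : ℕ) : ℝ) * ((2 * m - 1 : ℕ) : ℝ)
          ≤ (2 * (m:ℝ) + 2) * (2 * (m:ℝ) + 2) := by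
            apply mul_le_mul h1 h2 (by positivity) (by positivity)
        _ = (2 * (m:ℝ) + 2) ^ 2 := by ring
  · rw [Metric.mem_ball, dist_zero_right, Real.norm_eq_abs]; exact hxR
  · apply bsummable_of_le hν 1 R
    intro m
    rw [one_mul]
    apply bterm_bound hν m hxR.le hR1 1
    rw [Nat.abs_cast]; push_cast; nlinarith [(by positivity : (0:ℝ) ≤ (m:ℝ))]
  · rw [Metric.mem_ball, dist_zero_right, Real.norm_eq_abs]; exact hxR

lemma bA_rec {ν : ℝ} (hν : 0 ≤ ν) (m : ℕ) :
    bA ν (m + 1) * ((2 * (m:ℝ) + 2) * (2 * (m:ℝ) + 2 + 2 * ν)) = - bA ν m := by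
  have hG := bGamma_pos hν m
  have hpos : ((m:ℝ) + ν + 1) ≠ 0 := by positivity
  have hcast : ((m + 1 : ℕ) : ℝ) + ν + 1 = ((m : ℝ) + ν + 1) + 1 := by push_cast; ring
  rw [bA, bA, hcast, Real.Gamma_add_one hpos, Nat.factorial_succ]
  have hf : (m.factorial : ℝ) ≠ 0 := by positivity
  have hG' : Real.Gamma ((m:ℝ) + ν + 1) ≠ 0 := ne_of_gt hG
  have h4 : ((4:ℝ)) ^ m ≠ 0 := by positivity
  push_cast
  rw [pow_succ, pow_succ]
  field_simp
  ring

lemma bG_ode {ν : ℝ} (hν : 0 ≤ ν) (x : ℝ) :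
    x * bG2 ν x + (2 * ν + 1) * bG1 ν x + x * bG ν x = 0 := by
  set R := |x| + 1 with hRdef
  have hR1 : 1 ≤ R := by rw [hRdef]; linarith [abs_nonneg x]
  have hxR : |x| ≤ R := by rw [hRdef]; linarith
  set b : ℕ → ℝ := fun m => bA ν m * x ^ (2 * m + 1) with hbdef
  set d : ℕ → ℝ := fun m => if m = 0 then 0 else - b (m - 1) with hddef
  -- summabilities
  have hsb : Summable b := by
    apply bsummable_of_le hν R R
    intro m
    show ‖bA ν m * x ^ (2*m+1)‖ ≤ _
    have h1 : ‖bA ν m * x ^ (2*m+1)‖ = |bA ν m| * (|x| * |x| ^ (2*m)) := by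
      rw [Real.norm_eq_abs, abs_mul, abs_pow, pow_succ]
      ring
    have h2 : (R^2)^m = R ^ (2*m) := by rw [← pow_mul, mul_comm]
    have h3 : |x| ^ (2*m) ≤ R ^ (2*m) := pow_le_pow_left₀ (abs_nonneg _) hxR _
    have h4 : (1:ℝ) ≤ (2*(m:ℝ)+2)^2 := by nlinarith [(by positivity : (0:ℝ) ≤ (m:ℝ))]
    rw [h1]
    calc |bA ν m| * (|x| * |x| ^ (2*m)) ≤ |bA ν m| * (R * R ^ (2*m)) := by
          gcongr
      _ = (|bA ν m| * R ^ (2*m) * R) * 1 := by ring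
      _ ≤ (|bA ν m| * R ^ (2*m) * R) * (2*(m:ℝ)+2)^2 := by
          have : (0:ℝ) ≤ |bA ν m| * R ^ (2*m) * R := by positivity
          exact mul_le_mul_of_nonneg_left h4 this
      _ = R * (|bA ν m| * (2*(m:ℝ)+2)^2 * (R^2)^m) := by rw [h2]; ring
  have hsd : Summable d := by
    rw [← summable_nat_add_iff 1]
    simpa [hddef] using hsb.neg
  have hc2 : ∀ m : ℕ, |((2*m:ℕ):ℝ) * ((2*m-1:ℕ):ℝ)| ≤ (2*(m:ℝ)+2)^2 := by
    intro m
    rw [abs_mul, Nat.abs_cast, Nat.abs_cast]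
    have h1 : ((2 * m : ℕ) : ℝ) ≤ 2 * (m:ℝ) + 2 := by push_cast; linarith
    have h2 : ((2 * m - 1 : ℕ) : ℝ) ≤ 2 * (m:ℝ) + 2 := by
      have : (2 * m - 1 : ℕ) ≤ 2 * m := by omega
      calc ((2 * m - 1 : ℕ) : ℝ) ≤ ((2 * m : ℕ) : ℝ) := by exact_mod_cast this
        _ ≤ 2 * (m:ℝ) + 2 := h1
    calc ((2 * m : ℕ) : ℝ) * ((2 * m - 1 : ℕ) : ℝ)
        ≤ (2 * (m:ℝ) + 2) * (2 * (m:ℝ) + 2) := by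
          apply mul_le_mul h1 h2 (by positivity) (by positivity)
      _ = (2 * (m:ℝ) + 2) ^ 2 := by ring
  have hc1 : ∀ m : ℕ, |((2*m:ℕ):ℝ)| ≤ (2*(m:ℝ)+2)^2 := by
    intro m
    rw [Nat.abs_cast]; push_cast; nlinarith [(by positivity : (0:ℝ) ≤ (m:ℝ))]
  have hs2 : Summable (fun m => x * (bA ν m * ((2 * m : ℕ) : ℝ) * ((2 * m - 1 : ℕ) : ℝ) * x ^ (2 * m - 2))) := by
    apply bsummable_of_le hν R R
    intro m
    have hb := bterm_bound hν (y := x) m hxR hR1 2 (((2*m:ℕ):ℝ) * ((2*m-1:ℕ):ℝ)) (hc2 m)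
    calc ‖x * (bA ν m * ((2*m:ℕ):ℝ) * ((2*m-1:ℕ):ℝ) * x ^ (2*m-2))‖
        = |x| * ‖bA ν m * (((2*m:ℕ):ℝ) * ((2*m-1:ℕ):ℝ)) * x ^ (2*m-2)‖ := by
          rw [norm_mul, Real.norm_eq_abs]
          congr 2
          ring
      _ ≤ R * (|bA ν m| * (2*(m:ℝ)+2)^2 * (R^2)^m) := by
          apply mul_le_mul hxR hb (norm_nonneg _) (by linarith)
  have hs1 : Summable (fun m => (2 * ν + 1) * (bA ν m * ((2 * m : ℕ) : ℝ) * x ^ (2 * m - 1))) := by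
    apply bsummable_of_le hν (2*ν+1) R
    intro m
    have hb := bterm_bound hν (y := x) m hxR hR1 1 ((2*m:ℕ):ℝ) (hc1 m)
    calc ‖(2*ν+1) * (bA ν m * ((2*m:ℕ):ℝ) * x ^ (2*m-1))‖
        = (2*ν+1) * ‖bA ν m * ((2*m:ℕ):ℝ) * x ^ (2*m-1)‖ := by
          rw [norm_mul, Real.norm_eq_abs, abs_of_nonneg (by linarith : (0:ℝ) ≤ 2*ν+1)]
      _ ≤ (2*ν+1) * (|bA ν m| * (2*(m:ℝ)+2)^2 * (R^2)^m) := by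
          apply mul_le_mul le_rfl hb (norm_nonneg _) (by linarith)
  -- termwise identity
  have hterm : ∀ m : ℕ, x * (bA ν m * ((2 * m : ℕ) : ℝ) * ((2 * m - 1 : ℕ) : ℝ) * x ^ (2 * m - 2))
      + (2 * ν + 1) * (bA ν m * ((2 * m : ℕ) : ℝ) * x ^ (2 * m - 1)) = d m := by
    intro m
    cases m with
    | zero => simp [hddef]
    | succ m =>
      have e2 : 2 * (m+1) - 2 = 2*m := by omega
      have e1 : 2 * (m+1) - 1 = 2*m + 1 := by omega
      rw [e2, e1, hddef]
      simp only [Nat.succ_ne_zero, if_false, Nat.add_sub_cancel, hbdef]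
      have hx1 : x * x ^ (2*m) = x ^ (2*m+1) := by rw [pow_succ]; ring
      have hrec := bA_rec hν m
      push_cast
      linear_combination (x ^ (2*m+1)) * hrec
  -- sum up
  have hG2 : x * bG2 ν x = ∑' m, x * (bA ν m * ((2 * m : ℕ) : ℝ) * ((2 * m - 1 : ℕ) : ℝ) * x ^ (2 * m - 2)) := by
    rw [bG2, tsum_mul_left]
  have hG1 : (2 * ν + 1) * bG1 ν x = ∑' m, (2 * ν + 1) * (bA ν m * ((2 * m : ℕ) : ℝ) * x ^ (2 * m - 1)) := by
    rw [bG1, tsum_mul_left]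
  have hG0 : x * bG ν x = ∑' m, b m := by
    rw [bG, ← tsum_mul_left]
    apply tsum_congr
    intro m
    rw [hbdef]
    simp only []
    rw [pow_succ]
    ring
  have hdb : ∑' m, d m = - ∑' m, b m := by
    rw [Summable.tsum_eq_zero_add hsd]
    simp only [hddef, if_pos rfl, Nat.succ_ne_zero, if_false, Nat.add_sub_cancel, zero_add]
    rw [tsum_neg]
  rw [hG2, hG1, hG0, ← Summable.tsum_add hs2 hs1]
  rw [tsum_congr hterm, hdb]
  ring

/-- The Bessel function of the first kind of order `ν`, defined by its power series
`J_ν(x) = Σ_{m=0}^∞ (−1)^m / (m! Γ(m+ν+1)) (x/2)^{2m+ν}` (for `x ≥ 0`). -/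
noncomputable def besselJ (ν x : ℝ) : ℝ :=
  ∑' m : ℕ, ((-1 : ℝ) ^ m / (m.factorial * Real.Gamma ((m : ℝ) + ν + 1)))
    * (x / 2) ^ (2 * m) * (x / 2) ^ ν

lemma besselJ_eq (ν x : ℝ) : besselJ ν x = bG ν x * (x / 2) ^ ν := by
  rw [besselJ, tsum_mul_right, bG]
  congr 1
  apply tsum_congr
  intro m
  rw [bA, div_pow]
  have h4 : ((2:ℝ)) ^ (2*m) = 4 ^ m := by rw [pow_mul]; norm_num
  rw [h4]
  ring

theorem stmt_10 (ν t : ℝ) (hν : 0 ≤ ν) (ht : 0 < t) :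
    ∫ r in (0:ℝ)..t, r * (besselJ ν r) ^ 2 =
      (t ^ 2 - ν ^ 2) / 2 * (besselJ ν t) ^ 2
        + t ^ 2 / 2 * (deriv (besselJ ν) t) ^ 2 := by
  set q : ℝ → ℝ := fun x => (x / 2) ^ ν with hq
  have hJ : ∀ x : ℝ, besselJ ν x = bG ν x * q x := fun x => besselJ_eq ν x
  set F : ℝ → ℝ := fun r =>
    (r^2 - ν^2)/2 * (bG ν r)^2 * (q r)^2
      + 1/2 * (r * bG1 ν r + ν * bG ν r)^2 * (q r)^2 with hF
  have hcont_g : Continuous (bG ν) :=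
    continuous_iff_continuousAt.mpr fun x => (hasDerivAt_bG hν x).continuousAt
  have hcont_g1 : Continuous (bG1 ν) :=
    continuous_iff_continuousAt.mpr fun x => (hasDerivAt_bG1 hν x).continuousAt
  have hq_cont : Continuous q := by
    have h1 : Continuous (fun y : ℝ => y ^ ν) :=
      continuous_iff_continuousAt.mpr fun y => Real.continuousAt_rpow_const y ν (Or.inr hν)
    have h2 : q = (fun y : ℝ => y ^ ν) ∘ (fun y : ℝ => y / 2) := rfl
    rw [h2]
    exact h1.comp (continuous_id.div_const 2)
  have hJ_cont : Continuous (besselJ ν) := by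
    have : besselJ ν = fun x => bG ν x * q x := funext hJ
    rw [this]; exact hcont_g.mul hq_cont
  have hF_cont : Continuous F := by
    rw [hF]
    fun_prop
  -- derivative of q for x > 0
  have hqd : ∀ x : ℝ, 0 < x → HasDerivAt q (ν * q x / x) x := by
    intro x hx
    have h2 : (x/2) ≠ 0 := by positivity
    have h1 := (Real.hasDerivAt_rpow_const (x := x/2) (p := ν) (Or.inl h2)).comp x
      ((hasDerivAt_id x).div_const 2)
    convert h1 using 1
    rfl
    rfl
    rfl
    have h3 : (x/2 : ℝ) ^ (ν - 1) = (x/2)^ν / (x/2) := Real.rpow_sub_one h2 ν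
    simp only [hq]
    rw [h3]
    field_simp
  -- derivative of F on (0, t)
  have hFd : ∀ r ∈ Set.Ioo (0:ℝ) t, HasDerivAt F (r * besselJ ν r ^ 2) r := by
    intro r hr
    obtain ⟨hr0, hrt⟩ := hr
    have hA : HasDerivAt (fun r => (r^2 - ν^2)/2 * (bG ν r)^2 * (q r)^2)
        ((((2:ℕ) * r^1)/2 * (bG ν r)^2 + (r^2 - ν^2)/2 * ((2:ℕ) * (bG ν r)^1 * bG1 ν r)) * (q r)^2
          + ((r^2 - ν^2)/2 * (bG ν r)^2) * ((2:ℕ) * (q r)^1 * (ν * q r / r))) r := by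
      exact ((((hasDerivAt_pow 2 r).sub_const (ν^2)).div_const 2).mul
        ((hasDerivAt_bG hν r).pow 2)).mul ((hqd r hr0).pow 2)
    have hinner : HasDerivAt (fun r => r * bG1 ν r + ν * bG ν r)
        ((1 * bG1 ν r + r * bG2 ν r) + ν * bG1 ν r) r :=
      ((hasDerivAt_id r).mul (hasDerivAt_bG1 hν r)).add ((hasDerivAt_bG hν r).const_mul ν)
    have hB : HasDerivAt (fun r => 1/2 * (r * bG1 ν r + ν * bG ν r)^2 * (q r)^2)
        ((1/2 * ((2:ℕ) * (r * bG1 ν r + ν * bG ν r)^1 * ((1 * bG1 ν r + r * bG2 ν r) + ν * bG1 ν r))) * (q r)^2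
          + (1/2 * (r * bG1 ν r + ν * bG ν r)^2) * ((2:ℕ) * (q r)^1 * (ν * q r / r))) r :=
      ((hinner.pow 2).const_mul (1/2)).mul ((hqd r hr0).pow 2)
    have hsum := hA.add hB
    have hG2eq : bG2 ν r = (-(2*ν+1) * bG1 ν r - r * bG ν r) / r := by
      have := bG_ode hν r
      field_simp
      linarith
    convert hsum using 1
    rfl
    rfl
    rfl
    rw [hJ r, mul_pow, hG2eq]
    field_simp
    ring
  -- endpoint values
  have hF0 : F 0 = 0 := by
    simp only [hF]
    norm_num
    ring
  -- derivative of besselJ at t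
  have hJd : HasDerivAt (besselJ ν) (bG1 ν t * q t + bG ν t * (ν * q t / t)) t := by
    have h1 := (hasDerivAt_bG hν t).mul (hqd t ht)
    have h2 : besselJ ν = fun x => bG ν x * q x := funext hJ
    rw [h2]
    exact h1
  have hderivJt : deriv (besselJ ν) t = bG1 ν t * q t + bG ν t * (ν * q t / t) := hJd.deriv
  -- FTC
  have hint : IntervalIntegrable (fun r => r * besselJ ν r ^ 2) MeasureTheory.volume 0 t :=
    (continuous_id.mul (hJ_cont.pow 2)).intervalIntegrable 0 t
  have key := intervalIntegral.integral_eq_sub_of_hasDerivAt_of_le ht.le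
    hF_cont.continuousOn hFd hint
  rw [key, hF0, sub_zero]
  simp only [hF]
  rw [hJ t, hderivJt, mul_pow]
  field_simp
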